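/- Let A be the algebra of all upper-triangular complex 2×2 matrices, i.e. matrices x with entries x₁₁, x₁₂, x₂₂ ∈ ℂ and x₂₁ = 0, and define Δ : A → A by: Δ(x) = 0 if x₁₁ ≠ x₂₂, and Δ(x) is the matrix whose only nonzero entry is the (1,2)-entry equal to 2·x₁₂ if x₁₁ = x₂₂. Then Δ is a 2-local derivation on A which is not a derivation (Δ is not additive). -/

import Mathlib

/-- The algebra of upper-triangular complex `2×2` matrices. -/
def upperTriangular2 : Subalgebra ℂ (Matrix (Fin 2) (Fin 2) ℂ) where
  carrier := {x | x 1 0 = 0}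
  mul_mem' := by
    intro x y hx hy
    simp only [Set.mem_setOf_eq] at *
    simp [Matrix.mul_apply, Fin.sum_univ_two, hx, hy]
  add_mem' := by
    intro x y hx hy
    simp only [Set.mem_setOf_eq] at *
    simp [hx, hy]
  one_mem' := by
    simp [Matrix.one_apply]
  zero_mem' := by
    simp
  algebraMap_mem' := by
    intro c
    simp [Matrix.algebraMap_matrix_apply]

open Classical in
/-- The map `Δ` on the upper-triangular `2×2` matrices: `Δ(x) = 0` if
`x₁₁ ≠ x₂₂`, and `Δ(x)` is the matrix whose only nonzero entry is the
`(1,2)`-entry `2·x₁₂` if `x₁₁ = x₂₂`. -/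
noncomputable def Δtriangular (x : upperTriangular2) : upperTriangular2 :=
  if (x : Matrix (Fin 2) (Fin 2) ℂ) 0 0 = (x : Matrix (Fin 2) (Fin 2) ℂ) 1 1 then
    ⟨Matrix.single 0 1 (2 * (x : Matrix (Fin 2) (Fin 2) ℂ) 0 1), by
      show Matrix.single (0 : Fin 2) (1 : Fin 2)
        (2 * (x : Matrix (Fin 2) (Fin 2) ℂ) 0 1) 1 0 = 0
      simp [Matrix.single]⟩
  else 0

noncomputable def Dst (s t : ℂ) : upperTriangular2 →ₗ[ℂ] upperTriangular2 where
  toFun x := ⟨Matrix.single 0 1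
      (s * (x : Matrix (Fin 2) (Fin 2) ℂ) 0 1 +
        t * ((x : Matrix (Fin 2) (Fin 2) ℂ) 1 1 - (x : Matrix (Fin 2) (Fin 2) ℂ) 0 0)),
    by
      show Matrix.single (0 : Fin 2) (1 : Fin 2) _ 1 0 = 0
      simp [Matrix.single]⟩
  map_add' x y := by
    apply Subtype.ext
    ext i j
    fin_cases i <;> fin_cases j <;>
      simp [Matrix.single] <;> ring
  map_smul' c x := by
    apply Subtype.ext
    ext i j
    fin_cases i <;> fin_cases j <;>
      simp [Matrix.single] <;> ring

lemma Dst_leibniz (s t : ℂ) (u v : upperTriangular2) :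
    Dst s t (u * v) = Dst s t u * v + u * Dst s t v := by
  have hu : (u : Matrix (Fin 2) (Fin 2) ℂ) 1 0 = 0 := u.2
  have hv : (v : Matrix (Fin 2) (Fin 2) ℂ) 1 0 = 0 := v.2
  apply Subtype.ext
  ext i j
  fin_cases i <;> fin_cases j <;>
    simp [Dst, Matrix.single, Matrix.mul_apply, Fin.sum_univ_two, hu, hv] <;> ring

/-- **Zhang–Li.**  The map `Δ` above is a 2-local derivation on the algebra of
upper-triangular complex `2×2` matrices which is not additive, hence not a
derivation. -/
theorem two_local_derivation_not_derivation_upper_triangular :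
    (∀ x y : upperTriangular2,
      ∃ D : upperTriangular2 →ₗ[ℂ] upperTriangular2,
        (∀ u v, D (u * v) = D u * v + u * D v) ∧
        Δtriangular x = D x ∧ Δtriangular y = D y) ∧
    ¬ (∀ x y : upperTriangular2,
        Δtriangular (x + y) = Δtriangular x + Δtriangular y) ∧
    ¬ (∃ D : upperTriangular2 →ₗ[ℂ] upperTriangular2,
        (∀ u v, D (u * v) = D u * v + u * D v) ∧
        ∀ x, Δtriangular x = D x) := by
  have key : ∀ x y : upperTriangular2,
      ∃ D : upperTriangular2 →ₗ[ℂ] upperTriangular2,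
        (∀ u v, D (u * v) = D u * v + u * D v) ∧
        Δtriangular x = D x ∧ Δtriangular y = D y := by
    intro x y
    by_cases hx : (x : Matrix (Fin 2) (Fin 2) ℂ) 0 0 = (x : Matrix (Fin 2) (Fin 2) ℂ) 1 1 <;>
    by_cases hy : (y : Matrix (Fin 2) (Fin 2) ℂ) 0 0 = (y : Matrix (Fin 2) (Fin 2) ℂ) 1 1
    · refine ⟨Dst 2 0, Dst_leibniz 2 0, ?_, ?_⟩ <;>
      · simp only [Δtriangular]
        rw [if_pos ‹_›]
        apply Subtype.ext
        simp [Dst]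
    · refine ⟨Dst 2 (-2 * (y : Matrix (Fin 2) (Fin 2) ℂ) 0 1 /
        ((y : Matrix (Fin 2) (Fin 2) ℂ) 1 1 - (y : Matrix (Fin 2) (Fin 2) ℂ) 0 0)),
        Dst_leibniz _ _, ?_, ?_⟩
      · simp only [Δtriangular]
        rw [if_pos hx]
        apply Subtype.ext
        simp [Dst, hx]
      · simp only [Δtriangular]
        rw [if_neg hy]
        apply Subtype.ext
        have h : (y : Matrix (Fin 2) (Fin 2) ℂ) 1 1 - (y : Matrix (Fin 2) (Fin 2) ℂ) 0 0 ≠ 0 :=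
          sub_ne_zero.mpr (Ne.symm hy)
        simp only [Dst, LinearMap.coe_mk, AddHom.coe_mk, div_mul_cancel₀ _ h]
        simp
    · refine ⟨Dst 2 (-2 * (x : Matrix (Fin 2) (Fin 2) ℂ) 0 1 /
        ((x : Matrix (Fin 2) (Fin 2) ℂ) 1 1 - (x : Matrix (Fin 2) (Fin 2) ℂ) 0 0)),
        Dst_leibniz _ _, ?_, ?_⟩
      · simp only [Δtriangular]
        rw [if_neg hx]
        apply Subtype.ext
        have h : (x : Matrix (Fin 2) (Fin 2) ℂ) 1 1 - (x : Matrix (Fin 2) (Fin 2) ℂ) 0 0 ≠ 0 :=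
          sub_ne_zero.mpr (Ne.symm hx)
        simp only [Dst, LinearMap.coe_mk, AddHom.coe_mk, div_mul_cancel₀ _ h]
        simp
      · simp only [Δtriangular]
        rw [if_pos hy]
        apply Subtype.ext
        simp [Dst, hy]
    · refine ⟨Dst 0 0, Dst_leibniz 0 0, ?_, ?_⟩
      · simp only [Δtriangular]
        rw [if_neg hx]
        apply Subtype.ext
        simp [Dst]
      · simp only [Δtriangular]
        rw [if_neg hy]
        apply Subtype.ext
        simp [Dst]
  have notadd : ¬ (∀ x y : upperTriangular2,
      Δtriangular (x + y) = Δtriangular x + Δtriangular y) := by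
    intro h
    set a : upperTriangular2 := ⟨!![1,1;0,0], by show (!![1,1;0,0] : Matrix (Fin 2) (Fin 2) ℂ) 1 0 = 0; simp⟩
    set b : upperTriangular2 := ⟨!![0,0;0,1], by show (!![0,0;0,1] : Matrix (Fin 2) (Fin 2) ℂ) 1 0 = 0; simp⟩
    have hab := h a b
    have ha : Δtriangular a = 0 := by
      simp only [Δtriangular]
      rw [if_neg]
      simp [a]
    have hb : Δtriangular b = 0 := by
      simp only [Δtriangular]
      rw [if_neg]
      simp [b]
    rw [ha, hb, add_zero] at hab
    have h2 : ((Δtriangular (a + b) : upperTriangular2) : Matrix (Fin 2) (Fin 2) ℂ) 0 1 = 2 := by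
      simp only [Δtriangular]
      rw [if_pos]
      · simp [a, b, Matrix.single]
      · simp [a, b]
    rw [hab] at h2
    norm_num at h2
  refine ⟨key, notadd, ?_⟩
  rintro ⟨D, _, hD⟩
  exact notadd (fun x y => by rw [hD, hD, hD, map_add])
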